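/- Let E be a Polish space with its Borel σ-algebra and let ρ_disc(x,y) := 1 if x ≠ y and := 0 if x = y (the discrete metric, which is lower semicontinuous on E × E). Let (κ_t)_{t≥0} be a Markov semigroup on E and assume t ↦ W_{ρ_disc}(κ_t(x), κ_t(y)) is Borel measurable for each x, y. Then the following are equivalent: (a) there exists M > 0 such that ∫_0^∞ W_{ρ_disc}(κ_t(x), κ_t(y)) dt ≤ M for all x, y ∈ E; (b) there exists T > 0 such that sup_{x,y ∈ E} W_{ρ_disc}(κ_T(x), κ_T(y)) < 1. -/

import Mathlib

open MeasureTheory ProbabilityTheory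

/-- The optimal coupling cost `W_ρ(μ, ν) = inf { ∫ ρ dπ : π a coupling of μ and ν }`. -/
noncomputable def couplingCost {E : Type*} [MeasurableSpace E]
    (ρ : E × E → ENNReal) (μ ν : Measure E) : ENNReal :=
  ⨅ π ∈ {π : Measure (E × E) |
      IsProbabilityMeasure π ∧ π.map Prod.fst = μ ∧ π.map Prod.snd = ν},
    ∫⁻ p, ρ p ∂π

/-- The discrete metric on `E`, valued in `[0,∞]`. -/
noncomputable def discreteDist {E : Type*} : E × E → ENNReal :=
  fun p => open scoped Classical in if p.1 = p.2 then 0 else 1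

section Aux

variable {E : Type*} [MeasurableSpace E]

/-- Total variation-type distance. -/
noncomputable def tvDist (μ ν : Measure E) : ENNReal :=
  ⨆ (A : Set E) (_ : MeasurableSet A), μ A - ν A

lemma tvDist_le_one (μ ν : Measure E) [IsProbabilityMeasure μ] : tvDist μ ν ≤ 1 :=
  iSup₂_le fun A _ => tsub_le_self.trans (prob_le_one)

lemma discreteDist_le_one (p : E × E) : discreteDist p ≤ 1 := by
  unfold discreteDist; split <;> simp

lemma tvDist_le_couplingCost (hd : MeasurableSet {p : E × E | p.1 = p.2})
    (μ ν : Measure E) : tvDist μ ν ≤ couplingCost discreteDist μ ν := by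
  refine le_iInf₂ fun π hπ => ?_
  obtain ⟨hprob, hfst, hsnd⟩ := hπ
  have hD : MeasurableSet {p : E × E | p.1 ≠ p.2} := hd.compl
  have hcost : π {p : E × E | p.1 ≠ p.2} = ∫⁻ p, discreteDist p ∂π := by
    rw [show (discreteDist : E × E → ENNReal)
        = Set.indicator {p : E × E | p.1 ≠ p.2} 1 from ?_]
    · exact (lintegral_indicator_one hD).symm
    · funext p
      by_cases h : p.1 = p.2 <;> simp [discreteDist, h, Set.indicator]
  refine iSup₂_le fun A hA => ?_
  rw [← hcost]
  have h1 : μ A = π (Prod.fst ⁻¹' A) := by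
    rw [← hfst, Measure.map_apply measurable_fst hA]
  have h2 : ν A = π (Prod.snd ⁻¹' A) := by
    rw [← hsnd, Measure.map_apply measurable_snd hA]
  refine tsub_le_iff_right.mpr ?_
  rw [h1, h2, add_comm]
  calc π (Prod.fst ⁻¹' A) ≤ π (Prod.snd ⁻¹' A ∪ {p : E × E | p.1 ≠ p.2}) := by
        refine measure_mono fun p hp => ?_
        by_cases h : p.1 = p.2
        · exact Or.inl (by simpa [h] using hp)
        · exact Or.inr h
    _ ≤ π (Prod.snd ⁻¹' A) + π {p : E × E | p.1 ≠ p.2} := measure_union_le _ _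

lemma exists_decomp (μ ν : Measure E) [IsProbabilityMeasure μ] [IsProbabilityMeasure ν] :
    ∃ ξ p q : Measure E, μ = ξ + p ∧ ν = ξ + q ∧ p Set.univ = q Set.univ ∧
      p Set.univ ≤ tvDist μ ν := by
  obtain ⟨S, hS, h1, h2⟩ := hahn_decomposition (μ := μ) (ν := ν)
  have hle1 : ν.restrict S ≤ μ.restrict S := by
    refine Measure.le_iff.mpr fun A hA => ?_
    rw [Measure.restrict_apply hA, Measure.restrict_apply hA]
    exact h1 _ (hA.inter hS) Set.inter_subset_right
  have hle2 : μ.restrict Sᶜ ≤ ν.restrict Sᶜ := by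
    refine Measure.le_iff.mpr fun A hA => ?_
    rw [Measure.restrict_apply hA, Measure.restrict_apply hA]
    exact h2 _ (hA.inter hS.compl) Set.inter_subset_right
  refine ⟨μ.restrict Sᶜ + ν.restrict S, μ.restrict S - ν.restrict S,
    ν.restrict Sᶜ - μ.restrict Sᶜ, ?_, ?_, ?_, ?_⟩
  · ext A hA
    rw [Measure.add_apply, Measure.add_apply, Measure.sub_apply hA hle1]
    simp only [Measure.restrict_apply hA]
    have hba : ν (A ∩ S) ≤ μ (A ∩ S) := h1 _ (hA.inter hS) Set.inter_subset_right
    rw [add_assoc, add_tsub_cancel_of_le hba, ← Set.diff_eq, add_comm (μ (A \ S)),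
      measure_inter_add_diff A hS]
  · ext A hA
    rw [Measure.add_apply, Measure.add_apply, Measure.sub_apply hA hle2]
    simp only [Measure.restrict_apply hA]
    have hab : μ (A ∩ Sᶜ) ≤ ν (A ∩ Sᶜ) := h2 _ (hA.inter hS.compl) Set.inter_subset_right
    rw [add_comm (μ (A ∩ Sᶜ)) (ν (A ∩ S)), add_assoc, add_tsub_cancel_of_le hab,
      ← Set.diff_eq, measure_inter_add_diff A hS]
  · rw [Measure.sub_apply MeasurableSet.univ hle1, Measure.sub_apply MeasurableSet.univ hle2]
    simp only [Measure.restrict_apply_univ]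
    have hba : ν S ≤ μ S := h1 S hS Set.Subset.rfl
    have hab : μ Sᶜ ≤ ν Sᶜ := h2 Sᶜ hS.compl Set.Subset.rfl
    have h1' : μ S + μ Sᶜ = 1 := by rw [measure_add_measure_compl hS, measure_univ]
    have h2' : ν S + ν Sᶜ = 1 := by rw [measure_add_measure_compl hS, measure_univ]
    have hfin : ν S + μ Sᶜ ≠ ⊤ :=
      ENNReal.add_ne_top.mpr ⟨measure_ne_top _ _, measure_ne_top _ _⟩
    refine (ENNReal.add_right_inj hfin).mp ?_
    calc (ν S + μ Sᶜ) + (μ S - ν S) = ((μ S - ν S) + ν S) + μ Sᶜ := by ring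
      _ = μ S + μ Sᶜ := by rw [tsub_add_cancel_of_le hba]
      _ = ν S + ν Sᶜ := by rw [h1', h2']
      _ = ((ν Sᶜ - μ Sᶜ) + μ Sᶜ) + ν S := by rw [tsub_add_cancel_of_le hab]; ring
      _ = (ν S + μ Sᶜ) + (ν Sᶜ - μ Sᶜ) := by ring
  · rw [Measure.sub_apply MeasurableSet.univ hle1, Measure.restrict_apply_univ,
      Measure.restrict_apply_univ]
    exact le_iSup₂_of_le S hS le_rfl

lemma couplingCost_le_tvDist (hd : MeasurableSet {p : E × E | p.1 = p.2})
    (μ ν : Measure E) [IsProbabilityMeasure μ] [IsProbabilityMeasure ν] :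
    couplingCost discreteDist μ ν ≤ tvDist μ ν := by
  obtain ⟨ξ, p, q, hμ, hν, hpq, hm⟩ := exists_decomp μ ν
  have hρ : Measurable (discreteDist (E := E)) := by
    rw [show (discreteDist (E := E))
        = Set.indicator {p : E × E | p.1 = p.2}ᶜ 1 from ?_]
    · exact measurable_const.indicator hd.compl
    · funext pp
      by_cases h : pp.1 = pp.2 <;> simp [discreteDist, h, Set.indicator]
  have hΔ : Measurable (fun x : E => (x, x)) := measurable_id.prodMk measurable_id
  have hp1 : p Set.univ ≤ 1 := by
    rw [← measure_univ (μ := μ), hμ, Measure.add_apply]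
    exact le_add_self
  have hmtop : p Set.univ ≠ ⊤ := (hp1.trans_lt ENNReal.one_lt_top).ne
  haveI : IsFiniteMeasure p := ⟨hp1.trans_lt ENNReal.one_lt_top⟩
  haveI : IsFiniteMeasure q :=
    ⟨by rw [← hpq]; exact hp1.trans_lt ENNReal.one_lt_top⟩
  set π : Measure (E × E) := ξ.map (fun x => (x, x)) + (p Set.univ)⁻¹ • p.prod q with hπ
  have hfst : π.map Prod.fst = μ := by
    rw [hπ, Measure.map_add _ _ measurable_fst, Measure.map_smul,
      Measure.map_map measurable_fst hΔ, Measure.map_fst_prod,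
      show (Prod.fst ∘ fun x : E => (x, x)) = id from rfl, Measure.map_id, ← hpq,
      smul_smul]
    rcases eq_or_ne (p Set.univ) 0 with h0 | h0
    · have hp0 : p = 0 := Measure.measure_univ_eq_zero.mp h0
      rw [hp0, smul_zero, hμ, hp0, add_zero]
    · rw [ENNReal.inv_mul_cancel h0 hmtop, one_smul, ← hμ]
  have hsnd : π.map Prod.snd = ν := by
    rw [hπ, Measure.map_add _ _ measurable_snd, Measure.map_smul,
      Measure.map_map measurable_snd hΔ, Measure.map_snd_prod,
      show (Prod.snd ∘ fun x : E => (x, x)) = id from rfl, Measure.map_id,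
      smul_smul]
    rcases eq_or_ne (p Set.univ) 0 with h0 | h0
    · have hq0 : q = 0 := by
        refine Measure.measure_univ_eq_zero.mp ?_
        rw [← hpq]; exact h0
      rw [hq0, smul_zero, hν, hq0, add_zero]
    · rw [ENNReal.inv_mul_cancel h0 hmtop, one_smul, ← hν]
  have hprob : IsProbabilityMeasure π := by
    constructor
    have h := Measure.map_apply (μ := π) measurable_fst MeasurableSet.univ
    rw [Set.preimage_univ, hfst, measure_univ] at h
    exact h.symm
  calc couplingCost discreteDist μ ν ≤ ∫⁻ pp, discreteDist pp ∂π :=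
        iInf₂_le π ⟨hprob, hfst, hsnd⟩
    _ = ∫⁻ x, discreteDist (x, x) ∂ξ
        + (p Set.univ)⁻¹ * ∫⁻ pp, discreteDist pp ∂(p.prod q) := by
        rw [hπ, lintegral_add_measure, lintegral_smul_measure, lintegral_map hρ hΔ, smul_eq_mul]
    _ ≤ 0 + (p Set.univ)⁻¹ * (p Set.univ * p Set.univ) := by
        refine add_le_add ?_ (mul_le_mul' le_rfl ?_)
        · simp [discreteDist]
        · calc ∫⁻ pp, discreteDist pp ∂(p.prod q) ≤ ∫⁻ _, 1 ∂(p.prod q) :=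
                lintegral_mono discreteDist_le_one
            _ = (p.prod q) Set.univ := lintegral_one
            _ = p Set.univ * p Set.univ := by
                rw [← Set.univ_prod_univ, Measure.prod_prod, ← hpq]
    _ ≤ p Set.univ := by
        rw [zero_add]
        rcases eq_or_ne (p Set.univ) 0 with h0 | h0
        · simp [h0]
        · rw [← mul_assoc, ENNReal.inv_mul_cancel h0 hmtop, one_mul]
    _ ≤ tvDist μ ν := hm

lemma tvDist_bind_le [Nonempty E] (K : Kernel E E) [IsMarkovKernel K]
    (μ ν : Measure E) [IsProbabilityMeasure μ] [IsProbabilityMeasure ν] :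
    tvDist (μ.bind K) (ν.bind K) ≤ (⨆ u, ⨆ v, tvDist (K u) (K v)) * tvDist μ ν := by
  set β := ⨆ u, ⨆ v, tvDist (K u) (K v) with hβ
  obtain ⟨ξ, p, q, hμ, hν, hpq, hm⟩ := exists_decomp μ ν
  refine iSup₂_le fun A hA => ?_
  set f : E → ENNReal := fun u => K u A with hf
  set b := ⨅ u, f u with hb
  have hfb : ∀ u, b ≤ f u := fun u => iInf_le _ u
  have hab : ∀ u, f u ≤ β + b := by
    intro u
    rw [← tsub_le_iff_left, hb]
    refine le_iInf fun v => ?_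
    rw [tsub_le_iff_left]
    have h1 : f u - f v ≤ tvDist (K u) (K v) := le_iSup₂_of_le A hA le_rfl
    have h2 : tvDist (K u) (K v) ≤ β := by
      rw [hβ]; exact le_iSup₂ (f := fun u v => tvDist (K u) (K v)) u v
    calc f u ≤ (f u - f v) + f v := le_tsub_add
      _ ≤ β + f v := add_le_add (h1.trans h2) le_rfl
  have hbind : ∀ ρ' : Measure E, (ρ'.bind ⇑K) A = ∫⁻ u, f u ∂ρ' := fun ρ' =>
    Measure.bind_apply hA K.measurable.aemeasurable
  have key : ∀ ρ' : Measure E, ∫⁻ u, f u ∂ρ' = ∫⁻ u, (f u - b) ∂ρ' + b * ρ' Set.univ := by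
    intro ρ'
    rw [← lintegral_const b (μ := ρ'), ← lintegral_add_right _ measurable_const]
    congr 1
    funext u
    exact (tsub_add_cancel_of_le (hfb u)).symm
  refine tsub_le_iff_right.mpr ?_
  have h4 : ∫⁻ u, (f u - b) ∂p ≤ β * p Set.univ := by
    calc ∫⁻ u, (f u - b) ∂p ≤ ∫⁻ _, β ∂p :=
          lintegral_mono fun u => tsub_le_iff_right.mpr (hab u)
      _ = β * p Set.univ := lintegral_const _
  have h6 : b * p Set.univ ≤ ∫⁻ u, f u ∂q := by
    rw [key q, hpq]; exact le_add_self
  have hmain : (μ.bind ⇑K) A ≤ (ν.bind ⇑K) A + β * p Set.univ := by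
    rw [hbind μ, hbind ν, hμ, hν, lintegral_add_measure, lintegral_add_measure]
    calc ∫⁻ u, f u ∂ξ + ∫⁻ u, f u ∂p
        = ∫⁻ u, f u ∂ξ + (∫⁻ u, (f u - b) ∂p + b * p Set.univ) := by rw [key p]
      _ ≤ ∫⁻ u, f u ∂ξ + (β * p Set.univ + ∫⁻ u, f u ∂q) :=
          add_le_add le_rfl (add_le_add h4 h6)
      _ = (∫⁻ u, f u ∂ξ + ∫⁻ u, f u ∂q) + β * p Set.univ := by ring
  calc (μ.bind ⇑K) A ≤ (ν.bind ⇑K) A + β * p Set.univ := hmain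
    _ ≤ (ν.bind ⇑K) A + β * tvDist μ ν := add_le_add le_rfl (mul_le_mul' le_rfl hm)
    _ = β * tvDist μ ν + (ν.bind ⇑K) A := by ring

end Aux

theorem stmt_11 {E : Type*} [TopologicalSpace E] [PolishSpace E]
    [MeasurableSpace E] [BorelSpace E]
    (κ : ℝ → Kernel E E)
    (hmk : ∀ t : ℝ, 0 ≤ t → IsMarkovKernel (κ t))
    (hsg : ∀ s t : ℝ, 0 ≤ s → 0 ≤ t → ∀ x : E, κ (t + s) x = (κ t x).bind (κ s))
    (hWmeas : ∀ x y : E,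
      Measurable fun t : ℝ => couplingCost discreteDist (κ t x) (κ t y)) :
    (∃ M : ℝ, 0 < M ∧ ∀ x y : E,
        (∫⁻ t in Set.Ioi (0:ℝ), couplingCost discreteDist (κ t x) (κ t y)) ≤
          ENNReal.ofReal M) ↔
    (∃ T : ℝ, 0 < T ∧
        (⨆ (x : E) (y : E), couplingCost discreteDist (κ T x) (κ T y)) < 1) := by
  classical
  rcases isEmpty_or_nonempty E with hE | hE
  · constructor
    · intro _
      refine ⟨1, one_pos, ?_⟩
      rw [iSup_of_empty]
      exact lt_of_le_of_lt bot_le zero_lt_one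
    · intro _
      exact ⟨1, one_pos, fun x => isEmptyElim x⟩
  have hd : MeasurableSet {p : E × E | p.1 = p.2} :=
    (isClosed_eq continuous_fst continuous_snd).measurableSet
  have hprob : ∀ t : ℝ, 0 ≤ t → ∀ x : E, IsProbabilityMeasure (κ t x) :=
    fun t ht x => (hmk t ht).isProbabilityMeasure x
  have hbound1 : ∀ t : ℝ, 0 ≤ t → ∀ x y : E,
      couplingCost discreteDist (κ t x) (κ t y) ≤ 1 := by
    intro t ht x y
    haveI := hprob t ht x
    haveI := hprob t ht y
    exact (couplingCost_le_tvDist hd _ _).trans (tvDist_le_one _ _)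
  have hcontr : ∀ t s : ℝ, 0 ≤ t → 0 ≤ s → ∀ x y : E,
      couplingCost discreteDist (κ (t + s) x) (κ (t + s) y) ≤
        (⨆ u, ⨆ v, couplingCost discreteDist (κ s u) (κ s v)) *
          couplingCost discreteDist (κ t x) (κ t y) := by
    intro t s ht hs x y
    haveI := hmk s hs
    haveI := hprob t ht x
    haveI := hprob t ht y
    haveI := hprob (t + s) (by linarith) x
    haveI := hprob (t + s) (by linarith) y
    calc couplingCost discreteDist (κ (t + s) x) (κ (t + s) y)
        ≤ tvDist (κ (t + s) x) (κ (t + s) y) := couplingCost_le_tvDist hd _ _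
      _ = tvDist ((κ t x).bind ⇑(κ s)) ((κ t y).bind ⇑(κ s)) := by
          rw [hsg s t hs ht x, hsg s t hs ht y]
      _ ≤ (⨆ u, ⨆ v, tvDist (κ s u) (κ s v)) * tvDist (κ t x) (κ t y) :=
          tvDist_bind_le (κ s) _ _
      _ ≤ (⨆ u, ⨆ v, couplingCost discreteDist (κ s u) (κ s v)) *
            couplingCost discreteDist (κ t x) (κ t y) := by
          refine mul_le_mul' ?_ (tvDist_le_couplingCost hd _ _)
          exact iSup₂_mono fun u v => tvDist_le_couplingCost hd _ _
  constructor
  · rintro ⟨M, hM, hint⟩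
    refine ⟨M + 1, by linarith, ?_⟩
    have hsuple : ∀ t : ℝ, 0 ≤ t →
        (⨆ u, ⨆ v, couplingCost discreteDist (κ t u) (κ t v)) ≤ 1 :=
      fun t ht => iSup₂_le (hbound1 t ht)
    have hmono : ∀ x y : E, ∀ t ∈ Set.Ioc (0:ℝ) (M + 1),
        couplingCost discreteDist (κ (M + 1) x) (κ (M + 1) y) ≤
          couplingCost discreteDist (κ t x) (κ t y) := by
      intro x y t ht
      have h := hcontr t (M + 1 - t) ht.1.le (by linarith [ht.2]) x y
      rw [show t + (M + 1 - t) = M + 1 by ring] at h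
      refine h.trans ?_
      calc (⨆ u, ⨆ v, couplingCost discreteDist (κ (M + 1 - t) u) (κ (M + 1 - t) v)) *
            couplingCost discreteDist (κ t x) (κ t y)
          ≤ 1 * couplingCost discreteDist (κ t x) (κ t y) :=
            mul_le_mul' (hsuple _ (by linarith [ht.2])) le_rfl
        _ = couplingCost discreteDist (κ t x) (κ t y) := one_mul _
    have key : ∀ x y : E, couplingCost discreteDist (κ (M + 1) x) (κ (M + 1) y) ≤
        ENNReal.ofReal M / ENNReal.ofReal (M + 1) := by
      intro x y
      rw [ENNReal.le_div_iff_mul_le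
        (Or.inl (ENNReal.ofReal_pos.mpr (by linarith)).ne')
        (Or.inl ENNReal.ofReal_ne_top)]
      calc couplingCost discreteDist (κ (M + 1) x) (κ (M + 1) y) * ENNReal.ofReal (M + 1)
          = ∫⁻ _ in Set.Ioc (0:ℝ) (M + 1),
              couplingCost discreteDist (κ (M + 1) x) (κ (M + 1) y) := by
            rw [setLIntegral_const, Real.volume_Ioc, sub_zero]
        _ ≤ ∫⁻ t in Set.Ioc (0:ℝ) (M + 1),
              couplingCost discreteDist (κ t x) (κ t y) :=
            setLIntegral_mono (hWmeas x y) (hmono x y)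
        _ ≤ ∫⁻ t in Set.Ioi (0:ℝ), couplingCost discreteDist (κ t x) (κ t y) :=
            lintegral_mono_set Set.Ioc_subset_Ioi_self
        _ ≤ ENNReal.ofReal M := hint x y
    refine lt_of_le_of_lt (iSup₂_le key) ?_
    rw [ENNReal.div_lt_iff
      (Or.inl (ENNReal.ofReal_pos.mpr (by linarith)).ne')
      (Or.inl ENNReal.ofReal_ne_top), one_mul]
    exact (ENNReal.ofReal_lt_ofReal_iff (by linarith)).mpr (by linarith)
  · rintro ⟨T, hT, hsup⟩
    set c := ⨆ x, ⨆ y, couplingCost discreteDist (κ T x) (κ T y) with hc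
    have hcn : ∀ n : ℕ, ∀ t : ℝ, (n : ℝ) * T ≤ t → ∀ x y : E,
        couplingCost discreteDist (κ t x) (κ t y) ≤ c ^ n := by
      intro n
      induction n with
      | zero =>
        intro t ht x y
        simpa using hbound1 t (by simpa using ht) x y
      | succ n ih =>
        intro t ht x y
        have htT : (n : ℝ) * T ≤ t - T := by push_cast at ht; linarith
        have h0 : (0:ℝ) ≤ t - T := le_trans (by positivity) htT
        have h := hcontr (t - T) T h0 hT.le x y
        rw [show t - T + T = t by ring] at h
        calc couplingCost discreteDist (κ t x) (κ t y)
            ≤ c * couplingCost discreteDist (κ (t - T) x) (κ (t - T) y) := h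
          _ ≤ c * c ^ n := mul_le_mul' le_rfl (ih (t - T) htT x y)
          _ = c ^ (n + 1) := by rw [pow_succ, mul_comm]
    have hcover : Set.Ioi (0:ℝ) ⊆ ⋃ n : ℕ, Set.Ioc ((n : ℝ) * T) (((n : ℝ) + 1) * T) := by
      intro t ht
      simp only [Set.mem_Ioi] at ht
      have hk1 : 1 ≤ ⌈t / T⌉₊ := Nat.one_le_iff_ne_zero.mpr
        (Nat.ceil_pos.mpr (div_pos ht hT)).ne'
      refine Set.mem_iUnion.mpr ⟨⌈t / T⌉₊ - 1, ?_⟩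
      have hcast : ((⌈t / T⌉₊ - 1 : ℕ) : ℝ) = (⌈t / T⌉₊ : ℝ) - 1 := by
        rw [Nat.cast_sub hk1, Nat.cast_one]
      constructor
      · rw [hcast]
        have h1 : (⌈t / T⌉₊ : ℝ) < t / T + 1 :=
          Nat.ceil_lt_add_one (div_nonneg ht.le hT.le)
        calc ((⌈t / T⌉₊ : ℝ) - 1) * T < (t / T) * T :=
              mul_lt_mul_of_pos_right (by linarith) hT
          _ = t := div_mul_cancel₀ t hT.ne'
      · rw [hcast, sub_add_cancel]
        calc t = (t / T) * T := (div_mul_cancel₀ t hT.ne').symm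
          _ ≤ (⌈t / T⌉₊ : ℝ) * T :=
            mul_le_mul_of_nonneg_right (Nat.le_ceil _) hT.le
    have hpiece : ∀ x y : E, ∀ n : ℕ,
        ∫⁻ t in Set.Ioc ((n : ℝ) * T) (((n : ℝ) + 1) * T),
            couplingCost discreteDist (κ t x) (κ t y) ≤ c ^ n * ENNReal.ofReal T := by
      intro x y n
      calc ∫⁻ t in Set.Ioc ((n : ℝ) * T) (((n : ℝ) + 1) * T),
              couplingCost discreteDist (κ t x) (κ t y)
          ≤ ∫⁻ _ in Set.Ioc ((n : ℝ) * T) (((n : ℝ) + 1) * T), c ^ n :=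
            setLIntegral_mono measurable_const (fun t ht => hcn n t ht.1.le x y)
        _ = c ^ n * volume (Set.Ioc ((n : ℝ) * T) (((n : ℝ) + 1) * T)) :=
            setLIntegral_const _ _
        _ = c ^ n * ENNReal.ofReal T := by
            rw [Real.volume_Ioc]
            congr 1
            ring_nf
    have hBfin : (1 - c)⁻¹ * ENNReal.ofReal T ≠ ⊤ := by
      refine ENNReal.mul_ne_top ?_ ENNReal.ofReal_ne_top
      refine ENNReal.inv_ne_top.mpr fun h => ?_
      exact absurd (tsub_eq_zero_iff_le.mp h) (not_le.mpr hsup)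
    refine ⟨((1 - c)⁻¹ * ENNReal.ofReal T).toReal + 1, by positivity, ?_⟩
    intro x y
    calc ∫⁻ t in Set.Ioi (0:ℝ), couplingCost discreteDist (κ t x) (κ t y)
        ≤ ∫⁻ t in ⋃ n : ℕ, Set.Ioc ((n : ℝ) * T) (((n : ℝ) + 1) * T),
            couplingCost discreteDist (κ t x) (κ t y) := lintegral_mono_set hcover
      _ ≤ ∑' n : ℕ, ∫⁻ t in Set.Ioc ((n : ℝ) * T) (((n : ℝ) + 1) * T),
            couplingCost discreteDist (κ t x) (κ t y) := lintegral_iUnion_le _ _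
      _ ≤ ∑' n : ℕ, c ^ n * ENNReal.ofReal T := ENNReal.tsum_le_tsum (hpiece x y)
      _ = (1 - c)⁻¹ * ENNReal.ofReal T := by
          rw [ENNReal.tsum_mul_right, ENNReal.tsum_geometric]
      _ ≤ ENNReal.ofReal (((1 - c)⁻¹ * ENNReal.ofReal T).toReal + 1) := by
          conv_lhs => rw [← ENNReal.ofReal_toReal hBfin]
          exact ENNReal.ofReal_le_ofReal (by linarith)
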